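/- Let v be a random variable on [0, v_max] with CDF F and density f, and let x: [0, v_max] → [0,1] be a nondecreasing differentiable allocation function with x(0)=0. Define the Myerson payment p(v) = ∫₀^v z·x'(z) dz. Then E[p(v)] = E[φ(v)·x(v)], where φ(z) = z - (1-F(z))/f(z). -/

import Mathlib

/-- Myerson's revenue-equals-virtual-welfare identity for a single bidder. -/
theorem stmt13 (vmax : ℝ) (hv : 0 < vmax) (F f x x' : ℝ → ℝ)
    (hfc : ContinuousOn f (Set.Icc 0 vmax))
    (hfpos : ∀ v ∈ Set.Icc 0 vmax, 0 < f v)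
    (hF : ∀ v ∈ Set.Icc 0 vmax, F v = ∫ z in (0:ℝ)..v, f z)
    (hFmax : F vmax = 1)
    (hx0 : x 0 = 0)
    (hxmono : MonotoneOn x (Set.Icc 0 vmax))
    (hxrange : ∀ v ∈ Set.Icc 0 vmax, x v ∈ Set.Icc (0:ℝ) 1)
    (hx' : ∀ v ∈ Set.Icc 0 vmax, HasDerivAt x (x' v) v)
    (hx'c : ContinuousOn x' (Set.Icc 0 vmax)) :
    ∫ v in (0:ℝ)..vmax, (∫ z in (0:ℝ)..v, z * x' z) * f v
      = ∫ v in (0:ℝ)..vmax, (v - (1 - F v) / f v) * x v * f v := by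
  have hle : (0:ℝ) ≤ vmax := hv.le
  have huIcc : Set.uIcc (0:ℝ) vmax = Set.Icc 0 vmax := Set.uIcc_of_le hle
  set P : ℝ → ℝ := fun v => ∫ z in (0:ℝ)..v, z * x' z with hP
  set g : ℝ → ℝ := fun v => P v * F v + x v * v * (1 - F v) - P v with hg
  -- continuity of the integrand z * x' z on Icc
  have hzx'c : ContinuousOn (fun z => z * x' z) (Set.Icc 0 vmax) :=
    continuousOn_id.mul hx'c
  -- x is continuous on Icc
  have hxc : ContinuousOn x (Set.Icc 0 vmax) := fun v hvmem =>
    ((hx' v hvmem).continuousAt).continuousWithinAt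
  -- P continuous on Icc
  have hPc : ContinuousOn P (Set.Icc 0 vmax) := by
    have := intervalIntegral.continuousOn_primitive_interval
      (f := fun z => z * x' z) (a := (0:ℝ)) (b := vmax) (μ := MeasureTheory.volume)
      (by rw [huIcc]; exact (hzx'c.integrableOn_compact isCompact_Icc))
    rwa [huIcc] at this
  -- F continuous on Icc
  have hFc : ContinuousOn F (Set.Icc 0 vmax) := by
    have h1 : ContinuousOn (fun v => ∫ z in (0:ℝ)..v, f z) (Set.Icc 0 vmax) := by
      have := intervalIntegral.continuousOn_primitive_interval
        (f := f) (a := (0:ℝ)) (b := vmax) (μ := MeasureTheory.volume)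
        (by rw [huIcc]; exact (hfc.integrableOn_compact isCompact_Icc))
      rwa [huIcc] at this
    exact h1.congr hF
  -- derivative facts at interior points
  have hFd : ∀ v ∈ Set.Ioo (0:ℝ) vmax, HasDerivAt F (f v) v := by
    intro v hvm
    have hnb : Set.Icc (0:ℝ) vmax ∈ nhds v := Icc_mem_nhds hvm.1 hvm.2
    have hint : IntervalIntegrable f MeasureTheory.volume 0 v := by
      apply ContinuousOn.intervalIntegrable
      apply hfc.mono
      rw [Set.uIcc_of_le hvm.1.le]
      exact Set.Icc_subset_Icc le_rfl hvm.2.le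
    have hca : ContinuousAt f v := hfc.continuousAt hnb
    have h1 : HasDerivAt (fun u => ∫ z in (0:ℝ)..u, f z) (f v) v :=
      intervalIntegral.integral_hasDerivAt_right hint
        ⟨Set.Icc 0 vmax, hnb, hfc.aestronglyMeasurable measurableSet_Icc⟩ hca
    apply h1.congr_of_eventuallyEq
    filter_upwards [hnb] with u hu using (hF u hu)
  have hPd : ∀ v ∈ Set.Ioo (0:ℝ) vmax, HasDerivAt P (v * x' v) v := by
    intro v hvm
    have hnb : Set.Icc (0:ℝ) vmax ∈ nhds v := Icc_mem_nhds hvm.1 hvm.2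
    have hint : IntervalIntegrable (fun z => z * x' z) MeasureTheory.volume 0 v := by
      apply ContinuousOn.intervalIntegrable
      apply hzx'c.mono
      rw [Set.uIcc_of_le hvm.1.le]
      exact Set.Icc_subset_Icc le_rfl hvm.2.le
    have hca : ContinuousAt (fun z => z * x' z) v := hzx'c.continuousAt hnb
    exact intervalIntegral.integral_hasDerivAt_right hint
      ⟨Set.Icc 0 vmax, hnb, hzx'c.aestronglyMeasurable measurableSet_Icc⟩ hca
  -- derivative of g
  have hgd : ∀ v ∈ Set.Ioo (0:ℝ) vmax,
      HasDerivAt g (P v * f v + x v * (1 - F v) - x v * v * f v) v := by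
    intro v hvm
    have hvI : v ∈ Set.Icc (0:ℝ) vmax := Set.mem_Icc_of_Ioo hvm
    have h1 := ((hPd v hvm).mul (hFd v hvm)).add
      ((((hx' v hvI).mul (hasDerivAt_id v)).mul ((hasDerivAt_const v (1:ℝ)).sub (hFd v hvm))))
    have h2 := h1.sub (hPd v hvm)
    refine h2.congr_deriv ?_
    simp only [id_eq, Pi.mul_apply, Pi.sub_apply]
    ring
  -- boundary values
  have hg0 : g 0 = 0 := by
    simp [hg, hP, hx0, intervalIntegral.integral_same]
  have hgmax : g vmax = 0 := by
    simp [hg, hFmax]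
  -- integrability of g'
  have hg'c : ContinuousOn (fun v => P v * f v + x v * (1 - F v) - x v * v * f v)
      (Set.Icc 0 vmax) :=
    ((hPc.mul hfc).add (hxc.mul (continuousOn_const.sub hFc))).sub
      ((hxc.mul continuousOn_id).mul hfc)
  have hg'int : IntervalIntegrable (fun v => P v * f v + x v * (1 - F v) - x v * v * f v)
      MeasureTheory.volume 0 vmax := by
    apply ContinuousOn.intervalIntegrable
    rwa [huIcc]
  -- continuity of g
  have hgc : ContinuousOn g (Set.Icc 0 vmax) :=
    ((hPc.mul hFc).add ((hxc.mul continuousOn_id).mul (continuousOn_const.sub hFc))).sub hPc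
  -- FTC
  have key : ∫ v in (0:ℝ)..vmax, (P v * f v + x v * (1 - F v) - x v * v * f v) = 0 := by
    rw [intervalIntegral.integral_eq_sub_of_hasDeriv_right_of_le hle hgc
      (fun v hvm => (hgd v hvm).hasDerivWithinAt) hg'int, hgmax, hg0, sub_zero]
  -- rewrite RHS integrand
  have hRHS : ∫ v in (0:ℝ)..vmax, (v - (1 - F v) / f v) * x v * f v
      = ∫ v in (0:ℝ)..vmax, (x v * v * f v - x v * (1 - F v)) := by
    apply intervalIntegral.integral_congr
    intro v hvm
    rw [huIcc] at hvm
    have hf0 : f v ≠ 0 := (hfpos v hvm).ne'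
    field_simp
  rw [hRHS]
  have hint1 : IntervalIntegrable (fun v => P v * f v) MeasureTheory.volume 0 vmax := by
    apply ContinuousOn.intervalIntegrable; rw [huIcc]; exact hPc.mul hfc
  have hint2 : IntervalIntegrable (fun v => x v * v * f v - x v * (1 - F v))
      MeasureTheory.volume 0 vmax := by
    apply ContinuousOn.intervalIntegrable; rw [huIcc]
    exact ((hxc.mul continuousOn_id).mul hfc).sub (hxc.mul (continuousOn_const.sub hFc))
  have := intervalIntegral.integral_sub hint1 hint2
  have hfun : (fun v => P v * f v - (x v * v * f v - x v * (1 - F v)))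
      = fun v => P v * f v + x v * (1 - F v) - x v * v * f v := by
    funext v; ring
  rw [hfun] at this
  rw [key] at this
  have := sub_eq_zero.mp this.symm
  exact this
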